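/- With Ω_n defined as above, one has the explicit kernel elements: Ω_1(ν_b) = 0, Ω_3(1 + ν_b³) = 0, and Ω_5(ν_b⁵ + 2ν_b² + ν_w) = 0. In particular, for n ∈ {1, 3, 5} the operator Ω_n is not injective on polynomials of total degree at most n (without the symmetry condition). -/
import Mathlib


open MvPolynomial

namespace Stmt3

/-- The operator Ω_n := (2/3)(n + 1 + D_w − D_b) ∘ ((ν_w² + ν_b) n
    + ν_w (1 − ν_b ν_w) ∂_b + (1 − ν_b ν_w) ∂_w)
    − (ν_w (n+1) + (1 − ν_b ν_w) ∂_b) ∘ (ν_w n + (1 − ν_b ν_w) ∂_b),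
acting on ℚ[ν_b, ν_w] with ν_b = X 0, ν_w = X 1. -/
noncomputable def Omega (n : ℕ) (P : MvPolynomial (Fin 2) ℚ) : MvPolynomial (Fin 2) ℚ :=
  let νb : MvPolynomial (Fin 2) ℚ := X 0
  let νw : MvPolynomial (Fin 2) ℚ := X 1
  let Q1 := (n : MvPolynomial (Fin 2) ℚ) * ((νw ^ 2 + νb) * P)
      + νw * (1 - νb * νw) * pderiv (0 : Fin 2) P + (1 - νb * νw) * pderiv (1 : Fin 2) P
  let Q2 := ((n : MvPolynomial (Fin 2) ℚ) + 1) * Q1 + νw * pderiv (1 : Fin 2) Q1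
      - νb * pderiv (0 : Fin 2) Q1
  let R1 := (n : MvPolynomial (Fin 2) ℚ) * (νw * P) + (1 - νb * νw) * pderiv (0 : Fin 2) P
  let R2 := ((n : MvPolynomial (Fin 2) ℚ) + 1) * (νw * R1) + (1 - νb * νw) * pderiv (0 : Fin 2) R1
  (2 / 3 : ℚ) • Q2 - R2

lemma pderiv_two (i : Fin 2) : pderiv i (2 : MvPolynomial (Fin 2) ℚ) = 0 := by
  rw [← map_ofNat (C : ℚ →+* MvPolynomial (Fin 2) ℚ) 2, pderiv_C]
lemma pderiv_three (i : Fin 2) : pderiv i (3 : MvPolynomial (Fin 2) ℚ) = 0 := by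
  rw [← map_ofNat (C : ℚ →+* MvPolynomial (Fin 2) ℚ) 3, pderiv_C]
lemma pderiv_five (i : Fin 2) : pderiv i (5 : MvPolynomial (Fin 2) ℚ) = 0 := by
  rw [← map_ofNat (C : ℚ →+* MvPolynomial (Fin 2) ℚ) 5, pderiv_C]

lemma omega1 : Omega 1 (X 0 : MvPolynomial (Fin 2) ℚ) = 0 := by
  apply MvPolynomial.funext; intro x
  simp [Omega, Pi.single_apply, smul_eq_C_mul]
  ring

lemma omega3 : Omega 3 (1 + (X 0 : MvPolynomial (Fin 2) ℚ) ^ 3) = 0 := by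
  apply MvPolynomial.funext; intro x
  simp [Omega, Pi.single_apply, smul_eq_C_mul, pderiv_two, pderiv_three, pderiv_five]
  ring

lemma omega5 : Omega 5 ((X 0 : MvPolynomial (Fin 2) ℚ) ^ 5 + 2 * (X 0) ^ 2 + X 1) = 0 := by
  apply MvPolynomial.funext; intro x
  simp [Omega, Pi.single_apply, smul_eq_C_mul, pderiv_two, pderiv_three, pderiv_five]
  ring

/-- explicit kernel elements Ω_1(ν_b) = 0, Ω_3(1 + ν_b³) = 0,
Ω_5(ν_b⁵ + 2ν_b² + ν_w) = 0; in particular for n ∈ {1,3,5} the operator Ω_n is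
not injective on polynomials of total degree at most n (without the symmetry condition). -/
theorem stmt_3 :
    Omega 1 (X 0 : MvPolynomial (Fin 2) ℚ) = 0 ∧
    Omega 3 (1 + (X 0 : MvPolynomial (Fin 2) ℚ) ^ 3) = 0 ∧
    Omega 5 ((X 0 : MvPolynomial (Fin 2) ℚ) ^ 5 + 2 * (X 0) ^ 2 + X 1) = 0 ∧
    ∀ n ∈ ({1, 3, 5} : Set ℕ), ∃ P : MvPolynomial (Fin 2) ℚ,
      P ≠ 0 ∧ P.totalDegree ≤ n ∧ Omega n P = 0 := by
  refine ⟨omega1, omega3, omega5, ?_⟩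
  intro n hn
  rcases hn with rfl | rfl | rfl
  · exact ⟨X 0, X_ne_zero 0, by simp [totalDegree_X], omega1⟩
  · refine ⟨1 + X 0 ^ 3, ?_, ?_, omega3⟩
    · intro h
      have := congrArg (eval (fun _ => 0)) h
      simp at this
    · refine le_trans (totalDegree_add _ _) ?_
      simp [totalDegree_one, totalDegree_X_pow]
  · refine ⟨X 0 ^ 5 + 2 * X 0 ^ 2 + X 1, ?_, ?_, omega5⟩
    · intro h
      have := congrArg (eval (fun i => if i = 0 then 0 else 1)) h
      simp at this
    · refine le_trans (totalDegree_add _ _) (max_le (le_trans (totalDegree_add _ _) ?_) ?_)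
      · refine max_le ?_ ?_
        · simp [totalDegree_X_pow]
        · calc (2 * X 0 ^ 2 : MvPolynomial (Fin 2) ℚ).totalDegree
              ≤ (2 : MvPolynomial (Fin 2) ℚ).totalDegree + (X 0 ^ 2).totalDegree :=
                totalDegree_mul _ _
          _ ≤ 5 := by
                rw [← map_ofNat (C : ℚ →+* MvPolynomial (Fin 2) ℚ) 2]
                simp [totalDegree_C, totalDegree_X_pow]
      · simp [totalDegree_X]

end Stmt3
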